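/- Let G be a finite group, A ⊴ G a normal subgroup, and let r, s be integers with 0 ≤ r ≤ |A| − 1 and 0 ≤ s ≤ |A|, such that gcd(2, |A| − 1) divides r. If s is odd, then A is an (r,s)-regular set of G if and only if A is a perfect code of G. -/

import Mathlib

open scoped Pointwise

/-- A subset `C` of the vertices of a graph `Γ` is an `(r,s)`-regular set if every vertex
in `C` has exactly `r` neighbours in `C` and every vertex outside `C` has exactly `s`
neighbours in `C`. -/
def IsRegularVertexSet {V : Type*} (Γ : SimpleGraph V) (C : Set V) (r s : ℕ) : Prop :=
  (∀ v ∈ C, {w | w ∈ C ∧ Γ.Adj v w}.ncard = r) ∧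
  ∀ v ∉ C, {w | w ∈ C ∧ Γ.Adj v w}.ncard = s

/-- The coset graph `Cos(G,H,U)` on the left cosets of `H` in `G`:
`g₁H` and `g₂H` are adjacent iff `g₁⁻¹ g₂ ∈ U`. -/
def cosetGraph {G : Type*} [Group G] (H : Subgroup G) (U : Set G) : SimpleGraph (G ⧸ H) :=
  SimpleGraph.fromRel fun C D =>
    ∃ g₁ g₂ : G, QuotientGroup.mk g₁ = C ∧ QuotientGroup.mk g₂ = D ∧ g₁⁻¹ * g₂ ∈ U

/-- `U` is a valid connection set for a coset graph `Cos(G,H,U)`: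
inverse-closed, disjoint from `H`, and a union of double cosets of `H` (`HUH = U`). -/
def IsCosetGraphConnectionSet {G : Type*} [Group G] (H : Subgroup G) (U : Set G) : Prop :=
  U⁻¹ = U ∧ (H : Set G) ∩ U = ∅ ∧ (H : Set G) * U * (H : Set G) = U

/-- `A` is an `(r,s)`-regular set of the pair `(G,H)`: there is a coset graph
`Cos(G,H,U)` in which the set of left cosets of `H` in `A` is an `(r,s)`-regular set. -/
def IsRegularSetOfPair {G : Type*} [Group G] (H A : Subgroup G) (r s : ℕ) : Prop :=
  ∃ U : Set G, IsCosetGraphConnectionSet H U ∧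
    IsRegularVertexSet (cosetGraph H U)
      {C : G ⧸ H | ∃ a ∈ A, QuotientGroup.mk a = C} r s

/-- `A` is a perfect code of the pair `(G,H)` iff it is a `(0,1)`-regular set of `(G,H)`. -/
def IsPerfectCodeOfPair {G : Type*} [Group G] (H A : Subgroup G) : Prop :=
  IsRegularSetOfPair H A 0 1

/-- A subgroup `A` is an `(r,s)`-regular set of `G` iff it is an `(r,s)`-regular set of
the pair `(G,1)`, i.e. an `(r,s)`-regular set in some Cayley graph of `G`. -/
def IsRegularSetOfGroup {G : Type*} [Group G] (A : Subgroup G) (r s : ℕ) : Prop :=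
  IsRegularSetOfPair ⊥ A r s

/-- A subgroup `A` is a perfect code of `G` iff it is a `(0,1)`-regular set of `G`. -/
def IsPerfectCodeOfGroup {G : Type*} [Group G] (A : Subgroup G) : Prop :=
  IsRegularSetOfGroup A 0 1

/-- The conjugate subgroup `K^t = t⁻¹ K t`. -/
def conjSub {G : Type*} [Group G] (K : Subgroup G) (t : G) : Subgroup G :=
  K.map (MulAut.conj t⁻¹).toMonoidHom



section AuxComb

variable {α : Type*}

private lemma even_ncard_aux (f : α → α) (hf : Function.Involutive f) :
    ∀ n (S : Set α), S.Finite → S.ncard = n → (∀ x ∈ S, f x ∈ S) →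
      (∀ x ∈ S, f x ≠ x) → Even n := by
  intro n
  induction n using Nat.strong_induction_on with
  | _ n ih =>
    intro S hfin hcard hmap hnf
    rcases S.eq_empty_or_nonempty with rfl | ⟨x, hx⟩
    · simp only [Set.ncard_empty] at hcard
      simp [← hcard]
    · have hfx : f x ∈ S := hmap x hx
      have hne : f x ≠ x := hnf x hx
      have hsub : ({x, f x} : Set α) ⊆ S := by
        rintro y (rfl | hy)
        · exact hx
        · rw [Set.mem_singleton_iff] at hy; subst hy; exact hfx
      have hpair : ({x, f x} : Set α).ncard = 2 := Set.ncard_pair (Ne.symm hne)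
      have h2n : 2 ≤ n := by
        rw [← hcard, ← hpair]
        exact Set.ncard_le_ncard hsub hfin
      have hcard' : (S \ {x, f x}).ncard = n - 2 := by
        rw [Set.ncard_diff hsub (hfin.subset hsub), hpair, hcard]
      have hmap' : ∀ y ∈ S \ {x, f x}, f y ∈ S \ {x, f x} := by
        rintro y ⟨hyS, hy2⟩
        refine ⟨hmap y hyS, ?_⟩
        intro hmem
        rcases hmem with h | h
        · exact hy2 (Or.inr (by rw [Set.mem_singleton_iff, ← h, hf y]))
        · rw [Set.mem_singleton_iff] at h
          exact hy2 (Or.inl (hf.injective h))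
      have hnf' : ∀ y ∈ S \ {x, f x}, f y ≠ y := fun y hy => hnf y hy.1
      obtain ⟨k, hk⟩ := ih (n - 2) (by omega) _ (hfin.diff) hcard' hmap' hnf'
      exact ⟨k + 1, by omega⟩

private lemma exists_fixed_of_odd_ncard (f : α → α) (hf : Function.Involutive f)
    (S : Set α) (hfin : S.Finite) (hmap : ∀ x ∈ S, f x ∈ S) (hodd : Odd S.ncard) :
    ∃ x ∈ S, f x = x := by
  by_contra h
  push_neg at h
  exact (Nat.not_odd_iff_even.mpr
    (even_ncard_aux f hf S.ncard S hfin rfl hmap h)) hodd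

end AuxComb

section AuxGroup

variable {G : Type*} [Group G]

private lemma mem_of_invclosed {S : Set G} (hS : S⁻¹ = S) (z : G) :
    z⁻¹ ∈ S ↔ z ∈ S := by
  conv_rhs => rw [← hS]
  exact Iff.symm Set.mem_inv

private lemma inv_closed_diff {S P : Set G} (hS : S⁻¹ = S) (hP : P⁻¹ = P) :
    (S \ P)⁻¹ = S \ P := by
  ext y
  simp only [Set.mem_inv, Set.mem_diff]
  rw [mem_of_invclosed hS, mem_of_invclosed hP]

private lemma exists_invclosed_subset :
    ∀ m (T : Set G), T.Finite → T⁻¹ = T → m ≤ T.ncard →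
      (Even m ∨ ∃ x ∈ T, x⁻¹ = x) → ∃ S, S ⊆ T ∧ S⁻¹ = S ∧ S.ncard = m := by
  intro m
  induction m using Nat.strong_induction_on with
  | _ m ih =>
    intro T hfin hTinv hle hpar
    rcases Nat.eq_zero_or_pos m with rfl | hm
    · exact ⟨∅, by simp, Set.inv_empty, Set.ncard_empty _⟩
    rcases Nat.even_or_odd m with hev | hodd
    · -- m even, m ≥ 2
      have hm2 : 2 ≤ m := by
        obtain ⟨k, hk⟩ := hev; omega
      by_cases hall : ∀ x ∈ T, x⁻¹ = x
      · obtain ⟨S, hS, hScard⟩ := Set.exists_subset_card_eq hle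
        refine ⟨S, hS, ?_, hScard⟩
        ext y
        rw [Set.mem_inv]
        constructor
        · intro hy
          have h2 : (y⁻¹)⁻¹ = y⁻¹ := hall _ (hS hy)
          rw [inv_inv] at h2
          rw [h2]; exact hy
        · intro hy
          rwa [hall _ (hS hy)]
      · push_neg at hall
        obtain ⟨x, hxT, hxne⟩ := hall
        have hxinvT : x⁻¹ ∈ T := (mem_of_invclosed hTinv x).mpr hxT
        have hPinv : ({x, x⁻¹} : Set G)⁻¹ = {x, x⁻¹} := by
          rw [Set.inv_insert, Set.inv_singleton, inv_inv, Set.pair_comm]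
        have hPsub : ({x, x⁻¹} : Set G) ⊆ T := by
          rintro y (rfl | hy)
          · exact hxT
          · rw [Set.mem_singleton_iff] at hy; subst hy; exact hxinvT
        have hPcard : ({x, x⁻¹} : Set G).ncard = 2 :=
          Set.ncard_pair (fun h => hxne h.symm)
        have hT'card : (T \ {x, x⁻¹}).ncard = T.ncard - 2 := by
          rw [Set.ncard_diff hPsub (hfin.subset hPsub), hPcard]
        obtain ⟨S', hS'sub, hS'inv, hS'card⟩ := ih (m - 2) (by omega) (T \ {x, x⁻¹})
          (hfin.diff) (inv_closed_diff hTinv hPinv)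
          (by omega) (Or.inl (by obtain ⟨k, hk⟩ := hev; exact ⟨k - 1, by omega⟩))
        refine ⟨{x, x⁻¹} ∪ S', Set.union_subset hPsub (hS'sub.trans Set.diff_subset), ?_, ?_⟩
        · rw [Set.union_inv, hPinv, hS'inv]
        · have hdisj : Disjoint ({x, x⁻¹} : Set G) S' := by
            rw [Set.disjoint_left]
            intro a ha haS'
            exact (hS'sub haS').2 ha
          rw [Set.ncard_union_eq hdisj (Set.toFinite _) ((hfin.diff).subset hS'sub),
            hPcard, hS'card]
          omega
    · -- m odd
      obtain ⟨x, hxT, hxfix⟩ := hpar.resolve_left (Nat.not_even_iff_odd.mpr hodd)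
      have hsing : ({x} : Set G)⁻¹ = {x} := by rw [Set.inv_singleton, hxfix]
      have hT'card : (T \ {x}).ncard = T.ncard - 1 :=
        Set.ncard_diff_singleton_of_mem hxT
      obtain ⟨S', hS'sub, hS'inv, hS'card⟩ := ih (m - 1) (by omega) (T \ {x})
        (hfin.diff) (inv_closed_diff hTinv hsing) (by omega)
        (Or.inl (by obtain ⟨k, hk⟩ := hodd; exact ⟨k, by omega⟩))
      have hxS' : x ∉ S' := fun h => (hS'sub h).2 rfl
      refine ⟨insert x S', Set.insert_subset hxT (hS'sub.trans Set.diff_subset), ?_, ?_⟩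
      · rw [Set.inv_insert, hxfix, hS'inv]
      · rw [Set.ncard_insert_of_notMem hxS' ((hfin.diff).subset hS'sub), hS'card]
        omega

end AuxGroup


section AuxQuot

variable {G : Type*} [Group G]

private def cosetOf (A : Subgroup G) (q : G ⧸ A) : Set G :=
  {x : G | QuotientGroup.mk x = q}

private lemma cosetOf_one (A : Subgroup G) [A.Normal] : cosetOf A 1 = (A : Set G) := by
  ext x
  simp [cosetOf, QuotientGroup.eq_one_iff]

private lemma cosetOf_inv (A : Subgroup G) [A.Normal] (q : G ⧸ A) :
    (cosetOf A q)⁻¹ = cosetOf A q⁻¹ := by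
  ext x
  simp only [cosetOf, Set.mem_inv, Set.mem_setOf_eq, QuotientGroup.mk_inv]
  rw [inv_eq_iff_eq_inv]

private lemma cosetOf_ncard (A : Subgroup G) (q : G ⧸ A) :
    (cosetOf A q).ncard = Nat.card A := by
  obtain ⟨g, rfl⟩ := QuotientGroup.mk_surjective q
  have h : cosetOf A (QuotientGroup.mk g) = g • (A : Set G) := by
    ext x
    simp only [cosetOf, Set.mem_setOf_eq]
    rw [Set.mem_smul_set_iff_inv_smul_mem, smul_eq_mul]
    constructor
    · intro hx
      have h1 : x⁻¹ * g ∈ A := QuotientGroup.eq.mp hx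
      have h2 := A.inv_mem h1
      rwa [mul_inv_rev, inv_inv] at h2
    · intro hx
      have h2 := A.inv_mem hx
      rw [mul_inv_rev, inv_inv] at h2
      exact QuotientGroup.eq.mpr h2
  rw [h, Set.ncard_smul_set, ← Nat.card_coe_set_eq]
  rfl

private lemma count_eq (A : Subgroup G) [A.Normal] (U : Set G) (x : G) :
    {a : G | a ∈ A ∧ x⁻¹ * a ∈ U}.ncard
      = (U ∩ cosetOf A (QuotientGroup.mk x)⁻¹).ncard := by
  have himg : (fun a => x⁻¹ * a) '' {a : G | a ∈ A ∧ x⁻¹ * a ∈ U}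
      = U ∩ cosetOf A (QuotientGroup.mk x)⁻¹ := by
    ext u
    constructor
    · rintro ⟨a, ⟨haA, haU⟩, rfl⟩
      refine ⟨haU, ?_⟩
      show QuotientGroup.mk (x⁻¹ * a) = _
      rw [QuotientGroup.mk_mul, QuotientGroup.mk_inv,
        (QuotientGroup.eq_one_iff a).mpr haA, mul_one]
    · rintro ⟨hu, hq⟩
      have hq' : QuotientGroup.mk u = (QuotientGroup.mk x : G ⧸ A)⁻¹ := hq
      have hxu : x * u ∈ A := by
        rw [← QuotientGroup.eq_one_iff (x * u), QuotientGroup.mk_mul, hq', mul_inv_cancel]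
      exact ⟨x * u, ⟨hxu, by simpa [inv_mul_cancel_left] using hu⟩, by simp [inv_mul_cancel_left]⟩
  rw [← himg]
  exact (Set.ncard_image_of_injective _ (mul_right_injective x⁻¹)).symm

private lemma inter_iUnion_coset (A : Subgroup G) (F : (G ⧸ A) → Set G)
    (hF : ∀ q, F q ⊆ cosetOf A q) (p : G ⧸ A) :
    (⋃ q, F q) ∩ cosetOf A p = F p := by
  ext u
  constructor
  · rintro ⟨hu, hp⟩
    obtain ⟨q, hq⟩ := Set.mem_iUnion.mp hu
    have heq : q = p := by
      have h1 : QuotientGroup.mk u = q := hF q hq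
      have h2 : QuotientGroup.mk u = p := hp
      rw [← h1, h2]
    exact heq ▸ hq
  · intro hu
    exact ⟨Set.mem_iUnion.mpr ⟨p, hu⟩, hF p hu⟩

end AuxQuot
section AuxCore

variable {G : Type*} [Group G] [Fintype G]

open Classical in
private def QSet (A : Subgroup G) (r s : ℕ) : Prop :=
  ∃ U : Set G, U⁻¹ = U ∧ (1 : G) ∉ U ∧
    ∀ x : G, {a : G | a ∈ A ∧ x⁻¹ * a ∈ U}.ncard = if x ∈ A then r else s

private def InvCond (A : Subgroup G) : Prop :=
  ∀ g : G, g ∉ A → g * g ∈ A → ∃ x : G, x * x = 1 ∧ g⁻¹ * x ∈ A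

private lemma QSet_to_inv (A : Subgroup G) [A.Normal] {r s : ℕ} (hsodd : Odd s)
    (h : QSet A r s) : InvCond A := by
  obtain ⟨U, hUinv, h1, hcount⟩ := h
  intro g hg hg2
  have hq : (QuotientGroup.mk g : G ⧸ A)⁻¹ = QuotientGroup.mk g := by
    refine inv_eq_of_mul_eq_one_right ?_
    rw [← QuotientGroup.mk_mul]
    exact (QuotientGroup.eq_one_iff _).mpr hg2
  have hTcard : (U ∩ cosetOf A (QuotientGroup.mk g)).ncard = s := by
    have hc := hcount g
    rw [if_neg hg] at hc
    rw [← hq, ← count_eq A U g, hc]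
  have hmap : ∀ u ∈ U ∩ cosetOf A (QuotientGroup.mk g),
      u⁻¹ ∈ U ∩ cosetOf A (QuotientGroup.mk g) := by
    rintro u ⟨huU, huC⟩
    refine ⟨(mem_of_invclosed hUinv u).mpr huU, ?_⟩
    show QuotientGroup.mk u⁻¹ = _
    rw [QuotientGroup.mk_inv, (show QuotientGroup.mk u = (QuotientGroup.mk g : G ⧸ A) from huC), hq]
  obtain ⟨x, hxT, hxfix⟩ := exists_fixed_of_odd_ncard (fun u : G => u⁻¹)
    (fun u => inv_inv u) _ (Set.toFinite _) hmap (by rw [hTcard]; exact hsodd)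
  refine ⟨x, ?_, ?_⟩
  · have : x⁻¹ * x = 1 := inv_mul_cancel x
    rwa [(show x⁻¹ = x from hxfix)] at this
  · have hx : QuotientGroup.mk x = (QuotientGroup.mk g : G ⧸ A) := hxT.2
    rw [← QuotientGroup.eq_one_iff, QuotientGroup.mk_mul, QuotientGroup.mk_inv, hx,
      inv_mul_cancel]

private lemma inv_to_QSet (A : Subgroup G) [A.Normal] {r s : ℕ}
    (hr : r ≤ Nat.card A - 1) (hs : s ≤ Nat.card A)
    (hgcd : Nat.gcd 2 (Nat.card A - 1) ∣ r)
    (hinv : InvCond A) : QSet A r s := by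
  classical
  have hAinv : (A : Set G)⁻¹ = (A : Set G) := by
    ext x
    simp [Set.mem_inv]
  have hAcard : (A : Set G).ncard = Nat.card A := by
    rw [← Nat.card_coe_set_eq]; rfl
  have hA1card : ((A : Set G) \ {1}).ncard = Nat.card A - 1 := by
    rw [Set.ncard_diff_singleton_of_mem A.one_mem, hAcard]
  have hA1inv : ((A : Set G) \ {1})⁻¹ = (A : Set G) \ {1} :=
    inv_closed_diff hAinv (by rw [Set.inv_singleton, inv_one])
  -- parity condition for the piece inside A
  have hApar : Even r ∨ ∃ x ∈ (A : Set G) \ {1}, x⁻¹ = x := by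
    by_cases h2 : 2 ∣ (Nat.card A - 1)
    · left
      have hg2 : Nat.gcd 2 (Nat.card A - 1) = 2 := Nat.gcd_eq_left h2
      obtain ⟨k, hk⟩ := hg2 ▸ hgcd
      exact ⟨k, by omega⟩
    · right
      by_contra hno
      push_neg at hno
      have hmap : ∀ x ∈ (A : Set G) \ {1}, x⁻¹ ∈ (A : Set G) \ {1} := by
        rintro x ⟨hxA, hx1⟩
        refine ⟨A.inv_mem hxA, ?_⟩
        simp only [Set.mem_singleton_iff, inv_eq_one] at *
        exact fun h => hx1 h
      have hev := even_ncard_aux (fun u : G => u⁻¹) (fun u => inv_inv u)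
        _ _ (Set.toFinite _) rfl hmap hno
      rw [hA1card] at hev
      obtain ⟨k, hk⟩ := hev
      exact h2 ⟨k, by omega⟩
  obtain ⟨SA, hSA_sub, hSA_inv, hSA_card⟩ :=
    exists_invclosed_subset r _ (Set.toFinite _) hA1inv (by rw [hA1card]; exact hr) hApar
  -- selection of an s-subset in each coset, inverse-closed when the coset is self-paired
  have hcomb : ∀ q : G ⧸ A, ∃ S : Set G,
      S ⊆ cosetOf A q ∧ S.ncard = s ∧ (q⁻¹ = q → S⁻¹ = S) := by
    intro q
    by_cases hq : q⁻¹ = q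
    · have hfix : ∃ x ∈ cosetOf A q, x⁻¹ = x := by
        by_cases hq1 : q = 1
        · refine ⟨1, ?_, inv_one⟩
          rw [hq1, cosetOf_one]
          exact A.one_mem
        · obtain ⟨g, rfl⟩ := QuotientGroup.mk_surjective q
          have hgA : g ∉ A := fun h => hq1 ((QuotientGroup.eq_one_iff g).mpr h)
          have hg2 : g * g ∈ A := by
            rw [← QuotientGroup.eq_one_iff, QuotientGroup.mk_mul]
            nth_rewrite 1 [← hq]
            exact inv_mul_cancel _
          obtain ⟨x, hx2, hgx⟩ := hinv g hgA hg2
          refine ⟨x, ?_, inv_eq_of_mul_eq_one_right hx2⟩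
          show QuotientGroup.mk x = _
          have : (QuotientGroup.mk (g⁻¹ * x) : G ⧸ A) = 1 :=
            (QuotientGroup.eq_one_iff _).mpr hgx
          rw [QuotientGroup.mk_mul, QuotientGroup.mk_inv] at this
          calc QuotientGroup.mk x
              = (QuotientGroup.mk g : G ⧸ A) * ((QuotientGroup.mk g)⁻¹ * QuotientGroup.mk x) := by
                rw [mul_inv_cancel_left]
            _ = QuotientGroup.mk g := by rw [this, mul_one]
      obtain ⟨S, h1, h2, h3⟩ := exists_invclosed_subset s (cosetOf A q) (Set.toFinite _)
        (by rw [cosetOf_inv, hq]) (by rw [cosetOf_ncard]; exact hs) (Or.inr hfix)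
      exact ⟨S, h1, h3, fun _ => h2⟩
    · obtain ⟨S, h1, h2⟩ := Set.exists_subset_card_eq
        (show s ≤ (cosetOf A q).ncard by rw [cosetOf_ncard]; exact hs)
      exact ⟨S, h1, h2, fun h => absurd h hq⟩
  choose Sel hSel1 hSel2 hSel3 using hcomb
  obtain ⟨enc, henc⟩ := Countable.exists_injective_nat (G ⧸ A)
  set F : (G ⧸ A) → Set G := fun q =>
    if q = 1 then SA
    else if q⁻¹ = q then Sel q
    else if enc q < enc q⁻¹ then Sel q else (Sel q⁻¹)⁻¹ with hF
  have hFsub : ∀ q, F q ⊆ cosetOf A q := by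
    intro q
    rw [hF]
    dsimp only
    split_ifs with h1 h2 h3
    · rw [h1, cosetOf_one]
      exact hSA_sub.trans Set.diff_subset
    · exact hSel1 q
    · exact hSel1 q
    · intro u hu
      have h4 : u⁻¹ ∈ cosetOf A q⁻¹ := hSel1 _ (Set.mem_inv.mp hu)
      have h5 : u ∈ (cosetOf A q⁻¹)⁻¹ := Set.mem_inv.mpr h4
      rwa [cosetOf_inv, inv_inv] at h5
  have hFcard : ∀ q, (F q).ncard = if q = 1 then r else s := by
    intro q
    rw [hF]
    dsimp only
    split_ifs with h1 h2 h3
    · exact hSA_card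
    · exact hSel2 q
    · exact hSel2 q
    · rw [Set.ncard_inv]
      exact hSel2 _
  have hFinv : ∀ q, (F q)⁻¹ = F q⁻¹ := by
    intro q
    by_cases h1 : q = 1
    · subst h1
      rw [inv_one]
      simp only [hF, if_pos rfl]
      exact hSA_inv
    · by_cases h2 : q⁻¹ = q
      · rw [h2]
        simp only [hF, if_neg h1, if_pos h2]
        exact hSel3 q h2
      · have h1' : q⁻¹ ≠ 1 := fun h => h1 (by rw [← inv_inv q, h, inv_one])
        have h2' : (q⁻¹)⁻¹ ≠ q⁻¹ := by
          rw [inv_inv]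
          exact fun h => h2 h.symm
        have hne : enc q ≠ enc q⁻¹ := fun h => h2 (henc h).symm
        by_cases h3 : enc q < enc q⁻¹
        · have h3' : ¬ enc q⁻¹ < enc (q⁻¹)⁻¹ := by rw [inv_inv]; omega
          simp only [hF, if_neg h1, if_neg h2, if_pos h3, if_neg h1', if_neg h2', if_neg h3']
          rw [inv_inv]
        · have h3' : enc q⁻¹ < enc (q⁻¹)⁻¹ := by
            rw [inv_inv]
            rcases Nat.lt_or_ge (enc q⁻¹) (enc q) with h | h
            · exact h
            · omega
          simp only [hF, if_neg h1, if_neg h2, if_neg h3, if_neg h1', if_neg h2', if_pos h3']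
          rw [inv_inv]
  refine ⟨⋃ q, F q, ?_, ?_, ?_⟩
  · ext u
    simp only [Set.mem_inv, Set.mem_iUnion]
    constructor
    · rintro ⟨q, hq⟩
      refine ⟨q⁻¹, ?_⟩
      rw [← hFinv q]
      exact Set.mem_inv.mpr hq
    · rintro ⟨q, hq⟩
      refine ⟨q⁻¹, ?_⟩
      rw [← hFinv q]
      exact Set.mem_inv.mpr (by rwa [inv_inv])
  · intro h
    obtain ⟨q, hq⟩ := Set.mem_iUnion.mp h
    have h1 : QuotientGroup.mk (1 : G) = q := hFsub q hq
    have hq1 : q = 1 := by rw [← h1]; rfl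
    subst hq1
    simp only [hF, if_pos rfl] at hq
    exact (hSA_sub hq).2 rfl
  · intro x
    rw [count_eq A _ x, inter_iUnion_coset A F hFsub, hFcard]
    by_cases hx : x ∈ A
    · rw [if_pos hx, if_pos (by rw [inv_eq_one]; exact (QuotientGroup.eq_one_iff x).mpr hx)]
    · rw [if_neg hx, if_neg (fun h => hx ((QuotientGroup.eq_one_iff x).mp (by rwa [inv_eq_one] at h)))]

end AuxCore

section Bridge

variable {G : Type*} [Group G]

private lemma mk_bot_injective :
    Function.Injective (QuotientGroup.mk : G → G ⧸ (⊥ : Subgroup G)) := by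
  intro a b h
  have h2 := QuotientGroup.eq.mp h
  rwa [Subgroup.mem_bot, inv_mul_eq_one] at h2

private lemma adj_bot_iff (U : Set G) (hU : U⁻¹ = U) (h1 : (1 : G) ∉ U) (x y : G) :
    (cosetGraph (⊥ : Subgroup G) U).Adj (QuotientGroup.mk x) (QuotientGroup.mk y)
      ↔ x⁻¹ * y ∈ U := by
  show (SimpleGraph.fromRel _).Adj _ _ ↔ _
  rw [SimpleGraph.fromRel_adj]
  constructor
  · rintro ⟨hne, h | h⟩
    · obtain ⟨g₁, g₂, hg1, hg2, hg3⟩ := h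
      obtain rfl := mk_bot_injective hg1
      obtain rfl := mk_bot_injective hg2
      exact hg3
    · obtain ⟨g₁, g₂, hg1, hg2, hg3⟩ := h
      obtain rfl := mk_bot_injective hg1
      obtain rfl := mk_bot_injective hg2
      have h4 := (mem_of_invclosed hU _).mpr hg3
      rwa [mul_inv_rev, inv_inv] at h4
  · intro h
    refine ⟨?_, Or.inl ⟨x, y, rfl, rfl, h⟩⟩
    intro heq
    obtain rfl := mk_bot_injective heq
    rw [inv_mul_cancel] at h
    exact h1 h
private lemma mem_S_iff (A : Subgroup G) (x : G) :
    (QuotientGroup.mk x ∈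
      {C : G ⧸ (⊥ : Subgroup G) | ∃ a ∈ A, QuotientGroup.mk a = C}) ↔ x ∈ A := by
  constructor
  · rintro ⟨a, ha, h⟩
    obtain rfl := mk_bot_injective h
    exact ha
  · intro h
    exact ⟨x, h, rfl⟩

private lemma nbr_card (A : Subgroup G) (U : Set G) (hU : U⁻¹ = U) (h1 : (1 : G) ∉ U)
    (x : G) :
    {w : G ⧸ (⊥ : Subgroup G) |
        w ∈ {C : G ⧸ (⊥ : Subgroup G) | ∃ a ∈ A, QuotientGroup.mk a = C} ∧
        (cosetGraph (⊥ : Subgroup G) U).Adj (QuotientGroup.mk x) w}.ncard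
      = {a : G | a ∈ A ∧ x⁻¹ * a ∈ U}.ncard := by
  have himg := Set.ncard_image_of_injective {a : G | a ∈ A ∧ x⁻¹ * a ∈ U}
    (mk_bot_injective (G := G))
  rw [← himg]
  congr 1
  ext w
  constructor
  · rintro ⟨⟨a, ha, rfl⟩, hadj⟩
    exact ⟨a, ⟨ha, (adj_bot_iff U hU h1 x a).mp hadj⟩, rfl⟩
  · rintro ⟨a, ⟨ha, hu⟩, rfl⟩
    exact ⟨⟨a, ha, rfl⟩, (adj_bot_iff U hU h1 x a).mpr hu⟩

private lemma regular_iff_QSet [Fintype G] (A : Subgroup G) (r s : ℕ) :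
    IsRegularSetOfGroup A r s ↔ QSet A r s := by
  constructor
  · rintro ⟨U, ⟨hUinv, hU1, -⟩, hreg⟩
    have h1 : (1 : G) ∉ U := by
      intro h
      have hmem : (1 : G) ∈ (↑(⊥ : Subgroup G) : Set G) ∩ U :=
        ⟨by simp [Subgroup.coe_bot], h⟩
      rw [hU1] at hmem
      exact hmem
    refine ⟨U, hUinv, h1, fun x => ?_⟩
    by_cases hx : x ∈ A
    · rw [if_pos hx, ← nbr_card A U hUinv h1 x]
      exact hreg.1 _ ((mem_S_iff A x).mpr hx)
    · rw [if_neg hx, ← nbr_card A U hUinv h1 x]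
      exact hreg.2 _ (fun h => hx ((mem_S_iff A x).mp h))
  · rintro ⟨U, hUinv, h1, hcount⟩
    refine ⟨U, ⟨hUinv, ?_, ?_⟩, ?_, ?_⟩
    · ext z
      simp only [Subgroup.coe_bot, Set.mem_inter_iff, Set.mem_singleton_iff,
        Set.mem_empty_iff_false, iff_false, not_and]
      rintro rfl
      exact h1
    · rw [Subgroup.coe_bot, Set.singleton_one, one_mul, mul_one]
    · intro v hv
      obtain ⟨x, rfl⟩ := QuotientGroup.mk_surjective v
      have hx := (mem_S_iff A x).mp hv
      rw [nbr_card A U hUinv h1 x, hcount x, if_pos hx]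
    · intro v hv
      obtain ⟨x, rfl⟩ := QuotientGroup.mk_surjective v
      have hx : x ∉ A := fun h => hv ((mem_S_iff A x).mpr h)
      rw [nbr_card A U hUinv h1 x, hcount x, if_neg hx]

end Bridge

/-- **Corollary B2.** Let `A ⊴ G`, `0 ≤ r ≤ |A| − 1`, `0 ≤ s ≤ |A|`, with
`gcd(2, |A| − 1)` dividing `r`. If `s` is odd, then `A` is an `(r,s)`-regular set of `G`
iff `A` is a perfect code of `G`. -/
theorem corollaryB2 {G : Type*} [Group G] [Fintype G] (A : Subgroup G) (hA : A.Normal)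
    (r s : ℕ) (hr : r ≤ Nat.card ↥A - 1) (hs : s ≤ Nat.card ↥A)
    (hgcd : Nat.gcd 2 (Nat.card ↥A - 1) ∣ r) (hsodd : Odd s) :
    IsRegularSetOfGroup A r s ↔ IsPerfectCodeOfGroup A := by
  haveI := hA
  have hApos : 1 ≤ Nat.card ↥A := Nat.one_le_iff_ne_zero.mpr Nat.card_pos.ne'
  constructor
  · intro h
    exact (regular_iff_QSet A 0 1).mpr
      (inv_to_QSet A (Nat.zero_le _) hApos (dvd_zero _)
        (QSet_to_inv A hsodd ((regular_iff_QSet A r s).mp h)))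
  · intro h
    exact (regular_iff_QSet A r s).mpr
      (inv_to_QSet A hr hs hgcd
        (QSet_to_inv A odd_one ((regular_iff_QSet A 0 1).mp h)))
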